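/- Suppose it is not the case that 0 ≤ |m| − k + 1 < k (i.e., either |m| < k − 1 or |m| ≥ 2k − 1). Then the linear map f_{k,m} : V_{k−1} → V_k is injective and the dimension of its cokernel equals C(n+k−2, k). -/

import Mathlib

open Finsupp

/-- Multiindices `J : Fin n → ℕ` of total degree `j`. -/
abbrev MIdx (n j : ℕ) : Type := {J : Fin n → ℕ // ∑ i, J i = j}

/-- The complex vector space `V_j` with basis `{e_J : |J| = j}`. -/
abbrev V (n j : ℕ) : Type := MIdx n j →₀ ℂ

/-- `J + 1ᵢ` : the multiindex `J` with its `i`-th entry increased by 1. -/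
def incr {n : ℕ} (J : Fin n → ℕ) (i : Fin n) : Fin n → ℕ :=
  Function.update J i (J i + 1)

lemma sum_incr {n : ℕ} (J : Fin n → ℕ) (i : Fin n) :
    ∑ x, incr J i x = (∑ x, J x) + 1 := by
  unfold incr
  rw [Finset.sum_update_of_mem (Finset.mem_univ i),
    Finset.sum_eq_sum_sdiff_singleton_add (Finset.mem_univ i) J]
  ring

/-- The map `f_{j+1,m} : V_j → V_{j+1}`, `e_J ↦ ∑ᵢ (jᵢ+1)(mᵢ−jᵢ) e_{J+1ᵢ}`. -/
noncomputable def fMap (n : ℕ) (m : Fin n → ℕ) (j : ℕ) : V n j →ₗ[ℂ] V n (j + 1) :=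
  Finsupp.lift (V n (j + 1)) ℂ (MIdx n j) fun J =>
    ∑ i, (((J.1 i : ℂ) + 1) * ((m i : ℂ) - (J.1 i : ℂ))) •
      Finsupp.single (⟨incr J.1 i, by rw [sum_incr, J.2]⟩ : MIdx n (j + 1)) (1 : ℂ)

/-- `d(m,j)`: the number of multiindices `J` with `J i ≤ m i` for all `i` and `|J| = j`. -/
noncomputable def dCount (n : ℕ) (m : Fin n → ℕ) (j : ℤ) : ℕ :=
  Set.ncard {J : Fin n → ℕ | (∀ i, J i ≤ m i) ∧ ∑ i, (J i : ℤ) = j}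

/-- `w(m,j) = d(m,j) − d(m,j−1)`. -/
noncomputable def w (n : ℕ) (m : Fin n → ℕ) (j : ℤ) : ℤ :=
  (dCount n m j : ℤ) - (dCount n m (j - 1) : ℤ)

/-! ### Auxiliary development -/

section Aux

variable {n : ℕ}

/-- Decrement the `i`-th entry. -/
def decr (J : Fin n → ℕ) (i : Fin n) : Fin n → ℕ := Function.update J i (J i - 1)

lemma sum_decr (J : Fin n → ℕ) (i : Fin n) (h : 0 < J i) :
    (∑ x, decr J i x) + 1 = ∑ x, J x := by
  unfold decr
  rw [Finset.sum_update_of_mem (Finset.mem_univ i),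
    Finset.sum_eq_sum_sdiff_singleton_add (Finset.mem_univ i) J]
  omega

/-- `incr` on multiindices. -/
def incrIdx {j : ℕ} (J : MIdx n j) (i : Fin n) : MIdx n (j + 1) :=
  ⟨incr J.1 i, by rw [sum_incr, J.2]⟩

/-- `decr` on multiindices. -/
def decrIdx {j : ℕ} (J : MIdx n (j + 1)) (i : Fin n) (h : 0 < J.1 i) : MIdx n j :=
  ⟨decr J.1 i, by have h1 := sum_decr J.1 i h; have h2 := J.2; omega⟩

/-- decrement at `i'`, increment at `i`. -/
def moveIdx {j : ℕ} (J : MIdx n j) (i' i : Fin n) (h : 0 < J.1 i') : MIdx n j :=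
  ⟨incr (decr J.1 i') i, by
    rw [sum_incr]; have h1 := sum_decr J.1 i' h; have h2 := J.2; omega⟩

/-- The raising map `e_J ↦ ∑_{i : J i > 0} e_{J - 1_i}`. -/
noncomputable def eMap (n j : ℕ) : V n (j + 1) →ₗ[ℂ] V n j :=
  Finsupp.lift (V n j) ℂ (MIdx n (j + 1)) fun J =>
    ∑ i, if h : 0 < J.1 i then Finsupp.single (decrIdx J i h) (1 : ℂ) else 0

lemma fMap_single (m : Fin n → ℕ) (j : ℕ) (J : MIdx n j) :
    fMap n m j (Finsupp.single J 1) =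
      ∑ i, (((J.1 i : ℂ) + 1) * ((m i : ℂ) - (J.1 i : ℂ))) •
        Finsupp.single (incrIdx J i) (1 : ℂ) := by
  unfold fMap
  rw [Finsupp.lift_apply, Finsupp.sum_single_index (by simp), one_smul]
  rfl

lemma eMap_single (j : ℕ) (J : MIdx n (j + 1)) :
    eMap n j (Finsupp.single J 1) =
      ∑ i, if h : 0 < J.1 i then Finsupp.single (decrIdx J i h) (1 : ℂ) else 0 := by
  unfold eMap
  rw [Finsupp.lift_apply, Finsupp.sum_single_index (by simp), one_smul]

/-- the cross term appearing in both `EF` and `FE`. -/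
noncomputable def crossTerm (m : Fin n → ℕ) {j : ℕ} (J : MIdx n j) (i i' : Fin n) : V n j :=
  if h : i' ≠ i ∧ 0 < J.1 i' then
    (((J.1 i : ℂ) + 1) * ((m i : ℂ) - (J.1 i : ℂ))) •
      Finsupp.single (moveIdx J i' i h.2) (1 : ℂ)
  else 0

lemma incr_self (J : Fin n → ℕ) (i : Fin n) : incr J i i = J i + 1 := by
  simp [incr]

lemma incr_ne (J : Fin n → ℕ) {i i' : Fin n} (h : i' ≠ i) : incr J i i' = J i' := by
  simp [incr, Function.update_of_ne h]

lemma decr_ne (J : Fin n → ℕ) {i i' : Fin n} (h : i' ≠ i) : decr J i i' = J i' := by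
  simp [decr, Function.update_of_ne h]

lemma decr_incr (J : Fin n → ℕ) (i : Fin n) : decr (incr J i) i = J := by
  funext x
  by_cases hx : x = i
  · subst hx; simp [decr, incr]
  · simp [decr, incr, Function.update_of_ne hx]

lemma incr_decr (J : Fin n → ℕ) (i : Fin n) (h : 0 < J i) : incr (decr J i) i = J := by
  funext x
  by_cases hx : x = i
  · subst hx; simp [decr, incr]; omega
  · simp [decr, incr, Function.update_of_ne hx]

lemma decr_incr_comm (J : Fin n → ℕ) {i i' : Fin n} (h : i' ≠ i) :
    decr (incr J i) i' = incr (decr J i') i := by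
  funext x
  rcases eq_or_ne x i with rfl | hxi
  · simp [decr, incr, Function.update_of_ne (Ne.symm h), Function.update_of_ne h]
  · rcases eq_or_ne x i' with rfl | hxi'
    · simp [decr, incr, Function.update_of_ne hxi]
    · simp [decr, incr, Function.update_of_ne hxi, Function.update_of_ne hxi']

lemma pair_EF (m : Fin n → ℕ) {j : ℕ} (J : MIdx n j) (i i' : Fin n) :
    (((J.1 i : ℂ) + 1) * ((m i : ℂ) - (J.1 i : ℂ))) •
      (if h : 0 < (incrIdx J i).1 i' then
        Finsupp.single (decrIdx (incrIdx J i) i' h) (1 : ℂ) else 0) =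
    (if i' = i then (((J.1 i : ℂ) + 1) * ((m i : ℂ) - (J.1 i : ℂ))) •
        Finsupp.single J (1 : ℂ) else 0) + crossTerm m J i i' := by
  by_cases hii : i' = i
  · subst hii
    have hpos : 0 < (incrIdx J i').1 i' := by
      show 0 < incr J.1 i' i'
      rw [incr_self]; omega
    have hne : ¬(i' ≠ i' ∧ 0 < J.1 i') := fun hc => hc.1 rfl
    rw [dif_pos hpos, if_pos rfl, crossTerm, dif_neg hne, add_zero]
    have hAB : decrIdx (incrIdx J i') i' hpos = J := by
      apply Subtype.ext
      show decr (incr J.1 i') i' = J.1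
      exact decr_incr J.1 i'
    rw [hAB]
  · rw [if_neg hii, zero_add, crossTerm]
    have hval : (incrIdx J i).1 i' = J.1 i' := incr_ne J.1 hii
    by_cases hpos : 0 < J.1 i'
    · have hp2 : 0 < (incrIdx J i).1 i' := by rw [hval]; exact hpos
      rw [dif_pos hp2, dif_pos ⟨hii, hpos⟩]
      have hAB : decrIdx (incrIdx J i) i' hp2 = moveIdx J i' i hpos := by
        apply Subtype.ext
        show decr (incr J.1 i) i' = incr (decr J.1 i') i
        exact decr_incr_comm J.1 hii
      rw [hAB]
    · rw [dif_neg (show ¬ 0 < (incrIdx J i).1 i' by rw [hval]; exact hpos),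
        dif_neg (by tauto), smul_zero]

lemma EF_single (m : Fin n → ℕ) (j : ℕ) (J : MIdx n j) :
    eMap n j (fMap n m j (Finsupp.single J 1)) =
      (∑ i, (((J.1 i : ℂ) + 1) * ((m i : ℂ) - (J.1 i : ℂ)))) • Finsupp.single J 1 +
        ∑ i, ∑ i', crossTerm m J i i' := by
  rw [fMap_single, map_sum]
  have step : ∀ i : Fin n,
      eMap n j ((((J.1 i : ℂ) + 1) * ((m i : ℂ) - (J.1 i : ℂ))) •
        Finsupp.single (incrIdx J i) (1 : ℂ)) =
      (((J.1 i : ℂ) + 1) * ((m i : ℂ) - (J.1 i : ℂ))) • Finsupp.single J 1 +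
        ∑ i', crossTerm m J i i' := by
    intro i
    rw [map_smul, eMap_single, Finset.smul_sum,
      Finset.sum_congr rfl (fun i' _ => pair_EF m J i i'), Finset.sum_add_distrib]
    congr 1
    simp
  rw [Finset.sum_congr rfl (fun i _ => step i), Finset.sum_add_distrib, Finset.sum_smul]

lemma pair_FE (m : Fin n → ℕ) {j : ℕ} (J : MIdx n (j + 1)) (i' i : Fin n) :
    (if h : 0 < J.1 i' then
      ((((decrIdx J i' h).1 i : ℂ) + 1) * ((m i : ℂ) - ((decrIdx J i' h).1 i : ℂ))) •
        Finsupp.single (incrIdx (decrIdx J i' h) i) (1 : ℂ) else 0) =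
    (if i = i' then ((J.1 i : ℂ) * ((m i : ℂ) - (J.1 i : ℂ) + 1)) •
        Finsupp.single J (1 : ℂ) else 0) + crossTerm m J i i' := by
  by_cases hii : i = i'
  · subst hii
    have hne : ¬(i ≠ i ∧ 0 < J.1 i) := fun hc => hc.1 rfl
    rw [if_pos rfl, crossTerm, dif_neg hne, add_zero]
    by_cases hpos : 0 < J.1 i
    · rw [dif_pos hpos]
      have hidx : incrIdx (decrIdx J i hpos) i = J := by
        apply Subtype.ext
        show incr (decr J.1 i) i = J.1
        exact incr_decr J.1 i hpos
      have hd : (decrIdx J i hpos).1 i = J.1 i - 1 := by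
        show decr J.1 i i = J.1 i - 1
        simp [decr]
      rw [hidx, hd, Nat.cast_sub (Nat.one_le_iff_ne_zero.2 hpos.ne')]
      congr 1
      push_cast
      ring
    · rw [dif_neg hpos]
      have hz : J.1 i = 0 := by omega
      rw [hz]
      norm_num
  · rw [if_neg hii, zero_add, crossTerm]
    by_cases hpos : 0 < J.1 i'
    · rw [dif_pos hpos, dif_pos ⟨Ne.symm hii, hpos⟩]
      have hd : (decrIdx J i' hpos).1 i = J.1 i := decr_ne J.1 hii
      rw [hd]
      rfl
    · rw [dif_neg hpos, dif_neg (by tauto)]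

lemma FE_single (m : Fin n → ℕ) (j : ℕ) (J : MIdx n (j + 1)) :
    fMap n m j (eMap n j (Finsupp.single J 1)) =
      (∑ i, ((J.1 i : ℂ) * ((m i : ℂ) - (J.1 i : ℂ) + 1))) • Finsupp.single J 1 +
        ∑ i, ∑ i', crossTerm m J i i' := by
  rw [eMap_single, map_sum]
  have step : ∀ i' : Fin n,
      fMap n m j (if h : 0 < J.1 i' then Finsupp.single (decrIdx J i' h) (1 : ℂ) else 0) =
      ∑ i, ((if i = i' then ((J.1 i : ℂ) * ((m i : ℂ) - (J.1 i : ℂ) + 1)) •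
          Finsupp.single J (1 : ℂ) else 0) + crossTerm m J i i') := by
    intro i'
    by_cases hpos : 0 < J.1 i'
    · rw [dif_pos hpos, fMap_single]
      refine Finset.sum_congr rfl (fun i _ => ?_)
      rw [← pair_FE m J i' i, dif_pos hpos]
    · rw [dif_neg hpos, map_zero]
      symm
      refine Finset.sum_eq_zero (fun i _ => ?_)
      rw [← pair_FE m J i' i, dif_neg hpos]
  rw [Finset.sum_congr rfl (fun i' _ => step i'), Finset.sum_comm]
  have hsplit : ∀ i : Fin n,
      (∑ i', ((if i = i' then ((J.1 i : ℂ) * ((m i : ℂ) - (J.1 i : ℂ) + 1)) •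
          Finsupp.single J (1 : ℂ) else 0) + crossTerm m J i i')) =
      ((J.1 i : ℂ) * ((m i : ℂ) - (J.1 i : ℂ) + 1)) • Finsupp.single J (1 : ℂ) +
        ∑ i', crossTerm m J i i' := by
    intro i
    rw [Finset.sum_add_distrib]
    congr 1
    simp
  rw [Finset.sum_congr rfl (fun i _ => hsplit i), Finset.sum_add_distrib, Finset.sum_smul]

lemma sumJ_cast {j : ℕ} (J : MIdx n j) : (∑ i, (J.1 i : ℂ)) = (j : ℂ) := by
  rw [← Nat.cast_sum, J.2]

lemma comm_single (m : Fin n → ℕ) (j : ℕ) (J : MIdx n (j + 1)) :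
    eMap n (j + 1) (fMap n m (j + 1) (Finsupp.single J 1)) =
      fMap n m j (eMap n j (Finsupp.single J 1)) +
        ((∑ i, (m i : ℂ)) - 2 * ((j : ℂ) + 1)) • Finsupp.single J 1 := by
  rw [EF_single, FE_single]
  have key : (∑ i, (((J.1 i : ℂ) + 1) * ((m i : ℂ) - (J.1 i : ℂ)))) =
      (∑ i, ((J.1 i : ℂ) * ((m i : ℂ) - (J.1 i : ℂ) + 1))) +
        ((∑ i, (m i : ℂ)) - 2 * ((j : ℂ) + 1)) := by
    have h1 : (∑ i, (((J.1 i : ℂ) + 1) * ((m i : ℂ) - (J.1 i : ℂ)))) -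
        (∑ i, ((J.1 i : ℂ) * ((m i : ℂ) - (J.1 i : ℂ) + 1))) =
        ∑ i, ((m i : ℂ) - 2 * (J.1 i : ℂ)) := by
      rw [← Finset.sum_sub_distrib]
      exact Finset.sum_congr rfl (fun i _ => by ring)
    have h2 : (∑ i, ((m i : ℂ) - 2 * (J.1 i : ℂ))) =
        (∑ i, (m i : ℂ)) - 2 * ((j : ℂ) + 1) := by
      rw [Finset.sum_sub_distrib, ← Finset.mul_sum, sumJ_cast J]
      push_cast
      ring
    linear_combination h1 + h2
  rw [key, add_smul]
  abel

lemma base_single (m : Fin n → ℕ) (J : MIdx n 0) :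
    eMap n 0 (fMap n m 0 (Finsupp.single J 1)) =
      (∑ i, (m i : ℂ)) • Finsupp.single J 1 := by
  rw [EF_single]
  have hJ : ∀ i, J.1 i = 0 := by
    intro i
    have h2 := J.2
    have hle : J.1 i ≤ ∑ x, J.1 x := Finset.single_le_sum (fun x _ => Nat.zero_le _)
      (Finset.mem_univ i)
    omega
  have hcross : (∑ i, ∑ i', crossTerm m J i i') = 0 := by
    refine Finset.sum_eq_zero (fun i _ => Finset.sum_eq_zero (fun i' _ => ?_))
    have hneg : ¬(i' ≠ i ∧ 0 < J.1 i') := by rw [hJ i']; simp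
    rw [crossTerm, dif_neg hneg]
  rw [hcross, add_zero]
  congr 1
  refine Finset.sum_congr rfl (fun i _ => ?_)
  rw [hJ i]
  norm_num

/-! ### Operator level -/

lemma lhom_single_ext {j j' : ℕ} (φ ψ : V n j →ₗ[ℂ] V n j')
    (h : ∀ J : MIdx n j, φ (Finsupp.single J 1) = ψ (Finsupp.single J 1)) : φ = ψ := by
  refine Finsupp.lhom_ext (fun J b => ?_)
  have : (Finsupp.single J b : V n j) = b • Finsupp.single J 1 := by
    rw [Finsupp.smul_single, smul_eq_mul, mul_one]
  rw [this, map_smul, map_smul, h J]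

lemma comm_op (m : Fin n → ℕ) (j : ℕ) :
    (eMap n (j + 1)) ∘ₗ (fMap n m (j + 1)) =
      (fMap n m j) ∘ₗ (eMap n j) +
        ((∑ i, (m i : ℂ)) - 2 * ((j : ℂ) + 1)) •
          (LinearMap.id : V n (j + 1) →ₗ[ℂ] V n (j + 1)) := by
  refine lhom_single_ext _ _ (fun J => ?_)
  simpa using comm_single m j J

lemma base_op (m : Fin n → ℕ) :
    (eMap n 0) ∘ₗ (fMap n m 0) =
      (∑ i, (m i : ℂ)) • (LinearMap.id : V n 0 →ₗ[ℂ] V n 0) := by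
  refine lhom_single_ext _ _ (fun J => ?_)
  simpa using base_single m J

end Aux

/-! ### Iterated products of shifted operators -/

section IterProd

variable {M N : Type*} [AddCommGroup M] [Module ℂ M] [AddCommGroup N] [Module ℂ N]

/-- `(A - c 0)(A - c 1) ⋯ (A - c i)`. -/
noncomputable def iterProd (A : Module.End ℂ M) (c : ℕ → ℂ) : ℕ → Module.End ℂ M
  | 0 => A - c 0 • 1
  | j + 1 => iterProd A c j * (A - c (j + 1) • 1)

lemma iterProd_congr (A B : Module.End ℂ M) (c d : ℕ → ℂ) (i : ℕ)
    (h : ∀ s, s ≤ i → A - c s • 1 = B - d s • 1) :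
    iterProd A c i = iterProd B d i := by
  induction i with
  | zero => exact h 0 le_rfl
  | succ i ih =>
    rw [iterProd, iterProd, ih (fun s hs => h s (hs.trans (Nat.le_succ i))),
      h (i + 1) le_rfl]

lemma iterProd_swap (E : N →ₗ[ℂ] M) (F : M →ₗ[ℂ] N) (c : ℕ → ℂ) (i : ℕ) :
    (iterProd (F ∘ₗ E) c i) ∘ₗ F = F ∘ₗ iterProd (E ∘ₗ F) c i := by
  induction i with
  | zero =>
    simp only [iterProd]
    ext x
    simp
  | succ i ih =>
    simp only [iterProd, Module.End.mul_eq_comp]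
    have hmid : ((F ∘ₗ E) - c (i + 1) • (1 : Module.End ℂ N)) ∘ₗ F =
        F ∘ₗ ((E ∘ₗ F) - c (i + 1) • (1 : Module.End ℂ M)) := by
      ext x; simp
    rw [LinearMap.comp_assoc, hmid, ← LinearMap.comp_assoc, ih, LinearMap.comp_assoc]

lemma iterProd_rep (A : Module.End ℂ M) (c : ℕ → ℂ) (i : ℕ) :
    ∃ q : Module.End ℂ M, Commute A q ∧
      iterProd A c i = A * q + (∏ s ∈ Finset.range (i + 1), (-c s)) • 1 := by
  induction i with
  | zero =>
    refine ⟨1, Commute.one_right A, ?_⟩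
    have hp : (∏ s ∈ Finset.range (0 + 1), (-c s)) = -c 0 := by simp
    simp only [iterProd]
    rw [hp, mul_one, neg_smul, sub_eq_add_neg]
  | succ i ih =>
    obtain ⟨q, hq, hrep⟩ := ih
    refine ⟨q * (A - c (i + 1) • 1) + (∏ s ∈ Finset.range (i + 1), (-c s)) • 1, ?_, ?_⟩
    · have h1 : Commute A (A - c (i + 1) • 1) := by
        exact Commute.sub_right (Commute.refl A) ((Commute.one_right A).smul_right _)
      exact (hq.mul_right h1).add_right ((Commute.one_right A).smul_right _)
    · simp only [iterProd]
      rw [hrep, Finset.prod_range_succ (fun s => -c s) (i + 1)]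
      ext x
      simp only [Module.End.mul_apply, LinearMap.add_apply, LinearMap.sub_apply,
        LinearMap.smul_apply, Module.End.one_apply, map_sub, map_smul, map_add,
        smul_sub, smul_add, smul_smul]
      module

lemma iterProd_injective (A : Module.End ℂ M) (c : ℕ → ℂ) (i : ℕ)
    (hc : ∀ s, s ≤ i → c s ≠ 0) (hvan : iterProd A c i = 0) :
    Function.Injective A := by
  obtain ⟨q, hq, hrep⟩ := iterProd_rep A c i
  set d : ℂ := ∏ s ∈ Finset.range (i + 1), (-c s) with hd_def
  have hd : d ≠ 0 := by
    rw [hd_def]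
    refine Finset.prod_ne_zero_iff.2 (fun s hs => ?_)
    have := hc s (by simpa [Nat.lt_succ_iff] using hs)
    simpa using this
  rw [hrep] at hvan
  have hAq : A * q = -(d • (1 : Module.End ℂ M)) := eq_neg_of_add_eq_zero_left hvan
  have hker : ∀ x, A x = 0 → x = 0 := by
    intro x hx
    have h1 : (A * q) x = (q * A) x := by rw [hq.eq]
    have h2 : (q * A) x = 0 := by
      show q (A x) = 0
      rw [hx, map_zero]
    have h3 : (A * q) x = -(d • x) := by
      rw [hAq]
      simp
    have h4 : d • x = 0 := neg_eq_zero.mp (h3.symm.trans (h1.trans h2))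
    exact (smul_eq_zero.1 h4).resolve_left hd
  intro x y hxy
  have h5 : A (x - y) = 0 := by rw [map_sub, hxy, sub_self]
  exact sub_eq_zero.1 (hker _ h5)

end IterProd

/-! ### The vanishing polynomial identity -/

section Vanishing

variable {n : ℕ}

/-- The eigenvalue `c(s,j) = (j - s + 1)(|m| - s - j)`. -/
noncomputable def cf (m : Fin n → ℕ) (s j : ℕ) : ℂ :=
  ((j : ℂ) - (s : ℂ) + 1) * ((∑ i, (m i : ℂ)) - (s : ℂ) - (j : ℂ))

lemma cf_step (m : Fin n → ℕ) (s j : ℕ) :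
    cf m s (j + 1) = cf m s j + ((∑ i, (m i : ℂ)) - 2 * ((j : ℂ) + 1)) := by
  unfold cf
  push_cast
  ring

lemma cf_top (m : Fin n → ℕ) (j : ℕ) : cf m (j + 1) j = 0 := by
  unfold cf
  push_cast
  ring

lemma vanishing (m : Fin n → ℕ) : ∀ j : ℕ,
    iterProd ((eMap n j) ∘ₗ (fMap n m j)) (fun s => cf m s j) j = 0 := by
  intro j
  induction j with
  | zero =>
    simp only [iterProd]
    rw [base_op m]
    have hcf : cf m 0 0 = ∑ i, (m i : ℂ) := by
      unfold cf; push_cast; ring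
    ext x
    simp [hcf]
  | succ j ih =>
    have hcongr : iterProd ((eMap n (j + 1)) ∘ₗ (fMap n m (j + 1)))
        (fun s => cf m s (j + 1)) (j + 1) =
        iterProd ((fMap n m j) ∘ₗ (eMap n j)) (fun s => cf m s j) (j + 1) := by
      refine iterProd_congr _ _ _ _ _ (fun s _ => ?_)
      rw [comm_op m j, cf_step m s j, add_smul, Module.End.one_eq_id]
      abel
    rw [hcongr]
    simp only [iterProd, Module.End.mul_eq_comp]
    have h00 : (fMap n m j ∘ₗ eMap n j) -
        cf m (j + 1) j • (1 : Module.End ℂ (V n (j + 1))) = fMap n m j ∘ₗ eMap n j := by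
      ext x
      rw [cf_top]
      simp
    rw [h00, ← LinearMap.comp_assoc, iterProd_swap (eMap n j) (fMap n m j)]
    rw [ih]
    simp

end Vanishing

/-! ### Dimension counting -/

noncomputable instance (n j : ℕ) : Fintype (MIdx n j) :=
  Fintype.ofEquiv (Sym (Fin n) j) (Sym.equivNatSumOfFintype (Fin n) j)

lemma card_MIdx (n j : ℕ) : Fintype.card (MIdx n j) = (n + j - 1).choose j := by
  rw [← Fintype.card_congr (Sym.equivNatSumOfFintype (Fin n) j),
    Sym.card_sym_eq_choose, Fintype.card_fin]

lemma finrank_V (n j : ℕ) : Module.finrank ℂ (V n j) = (n + j - 1).choose j := by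
  rw [Module.finrank_finsupp_self, card_MIdx]

/-! ### Main theorem -/

/-- If it is not the case that `0 ≤ |m| − k + 1 < k`, then `f_{k,m} : V_{k−1} → V_k`
is injective and `dim coker f_{k,m} = C(n+k−2, k)`. -/
theorem nonresonant_injective_coker (n k : ℕ) (hn : 1 ≤ n) (hk : 1 ≤ k) (m : Fin n → ℕ)
    (h : ¬ (0 ≤ (∑ i, (m i : ℤ)) - k + 1 ∧ (∑ i, (m i : ℤ)) - k + 1 < k)) :
    Function.Injective (fMap n m (k - 1)) ∧
    Module.finrank ℂ (V n (k - 1 + 1) ⧸ LinearMap.range (fMap n m (k - 1)))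
      = Nat.choose (n + k - 2) k := by
  obtain ⟨j, rfl⟩ : ∃ j, k = j + 1 := ⟨k - 1, by omega⟩
  have hj : j + 1 - 1 = j := by omega
  rw [hj]
  have hcnz : ∀ s, s ≤ j → cf m s j ≠ 0 := by
    intro s hs
    unfold cf
    apply mul_ne_zero
    · intro hc
      have h2 : (s : ℂ) = ((j + 1 : ℕ) : ℂ) := by push_cast; linear_combination -hc
      have h3 := Nat.cast_injective (R := ℂ) h2
      omega
    · intro hc
      have hz : (∑ i, (m i : ℤ)) = s + j := by
        have h4 : (((∑ i, (m i : ℤ)) - s - j : ℤ) : ℂ) = 0 := by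
          push_cast
          linear_combination hc
        have h5 : ((∑ i, (m i : ℤ)) - s - j : ℤ) = 0 := by exact_mod_cast h4
        omega
      exact h ⟨by omega, by omega⟩
  have hvan := vanishing m j
  have hTinj : Function.Injective ((eMap n j) ∘ₗ (fMap n m j)) :=
    iterProd_injective _ _ j hcnz hvan
  have hinj : Function.Injective (fMap n m j) := by
    intro x y hxy
    apply hTinj
    show eMap n j (fMap n m j x) = eMap n j (fMap n m j y)
    rw [hxy]
  refine ⟨hinj, ?_⟩
  have hfd : Module.Finite ℂ (V n (j + 1)) := Module.Finite.finsupp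
  have hq := Submodule.finrank_quotient_add_finrank (LinearMap.range (fMap n m j))
  have hr : Module.finrank ℂ (LinearMap.range (fMap n m j)) =
      Module.finrank ℂ (V n j) := LinearMap.finrank_range_of_inj hinj
  rw [hr, finrank_V, finrank_V] at hq
  have hpascal : (n + (j + 1) - 1).choose (j + 1) =
      (n + j - 1).choose j + (n + j - 1).choose (j + 1) := by
    obtain ⟨n', rfl⟩ : ∃ n', n = n' + 1 := ⟨n - 1, by omega⟩
    have h1 : n' + 1 + (j + 1) - 1 = (n' + j) + 1 := by omega
    have h2 : n' + 1 + j - 1 = n' + j := by omega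
    rw [h1, h2]
    exact Nat.choose_succ_succ (n' + j) j
  have hgoal : n + (j + 1) - 2 = n + j - 1 := by omega
  rw [hgoal]
  omega
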